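/- Let R be a ℂ-algebra, let α ∈ ℂ be nonzero, let k ≥ 1, and let x, y, z, w ∈ R satisfy x*y = y*x, x*z = z*x, x*w = w*x, y*z = z*y, y*w = w*y, and x*y = α·z^{2k}. Then for all nonnegative integers t and l, the element z^t * (x^l + (−1)^{t+l} * y^l) belongs to the ℂ-subalgebra of R generated by the three elements z², x − y, and z*(x+y). -/

import Mathlib

theorem aux_a {R : Type*} [Ring R] (x y : R) (h : x * y = y * x) (l : ℕ) :
    (x - y) * (x^(l+1) + (-1:R)^(l+1) * y^(l+1)) + (x*y) * (x^l + (-1:R)^l * y^l)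
    = x^(l+2) + (-1:R)^(l+2) * y^(l+2) := by
  have hc : Commute x y := h
  have e1 : y * (x ^ l * x) = x ^ l * (x * y) := by
    rw [← mul_assoc, (hc.symm.pow_right l).eq, mul_assoc, ← h]
  have e2 : x * (y * y ^ l) = x * (y ^ l * y) := by
    rw [← pow_succ', pow_succ]
  have e3 : x * (x ^ l * x) = x ^ l * (x * x) := by
    rw [← mul_assoc, ← pow_succ', pow_succ, mul_assoc]
  have e4 : y * (y ^ l * y) = y ^ l * (y * y) := by
    rw [← mul_assoc, ← pow_succ', pow_succ, mul_assoc]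
  have e5 : x * (y * x ^ l) = x ^ l * (x * y) := by
    rw [(hc.symm.pow_right l).eq, ← mul_assoc, ← pow_succ', pow_succ, mul_assoc]
  rcases Nat.even_or_odd l with hl | hl
  · have c1 : (-1:R)^l = 1 := hl.neg_one_pow
    have c2 : (-1:R)^(l+1) = -1 := by rw [pow_succ, c1, one_mul]
    have c3 : (-1:R)^(l+2) = 1 := by rw [pow_succ, c2]; simp
    rw [c1, c2, c3]
    noncomm_ring [e1, e2, e3, e4, e5]
  · have c1 : (-1:R)^l = -1 := hl.neg_one_pow
    have c2 : (-1:R)^(l+1) = 1 := by rw [pow_succ, c1]; simp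
    have c3 : (-1:R)^(l+2) = -1 := by rw [pow_succ, c2, one_mul]
    rw [c1, c2, c3]
    noncomm_ring [e1, e2, e3, e4, e5]

theorem aux_b {R : Type*} [Ring R] (x y z : R) (hxy : x * y = y * x)
    (hxz : x * z = z * x) (hyz : y * z = z * y) (l : ℕ) :
    (z*(x+y)) * (x^(l+1) + (-1:R)^(l+1) * y^(l+1))
      - (x*y) * (z * (x^l + (-1:R)^(1+l) * y^l))
    = z * (x^(l+2) + (-1:R)^(1+(l+2)) * y^(l+2)) := by
  have hc : Commute x y := hxy
  have e3 : x * (x ^ l * x) = x ^ l * (x * x) := by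
    rw [← mul_assoc, ← pow_succ', pow_succ, mul_assoc]
  have e4 : y * (y ^ l * y) = y ^ l * (y * y) := by
    rw [← mul_assoc, ← pow_succ', pow_succ, mul_assoc]
  have f1 : x * (y * (z * x ^ l)) = z * (y * (x ^ l * x)) := by
    rw [← mul_assoc y z, hyz, mul_assoc z y, ← mul_assoc x z, hxz, mul_assoc z x,
        ← mul_assoc x y, hxy, mul_assoc y x, ← pow_succ', pow_succ]
  have f2 : x * (y * (z * y ^ l)) = z * (x * (y ^ l * y)) := by
    rw [← mul_assoc y z, hyz, mul_assoc z y, ← mul_assoc x z, hxz, mul_assoc z x,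
        ← pow_succ', pow_succ]
  rcases Nat.even_or_odd l with hl | hl
  · have c1 : (-1:R)^l = 1 := hl.neg_one_pow
    have c2 : (-1:R)^(l+1) = -1 := by rw [pow_succ, c1, one_mul]
    have c1' : (-1:R)^(1+l) = -1 := by rw [add_comm]; exact c2
    have c3 : (-1:R)^(1+(l+2)) = -1 := by
      rw [pow_add, pow_add, c1]; simp
    rw [c1', c2, c3]
    noncomm_ring [e3, e4, f1, f2]
  · have c1 : (-1:R)^l = -1 := hl.neg_one_pow
    have c2 : (-1:R)^(l+1) = 1 := by rw [pow_succ, c1]; simp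
    have c1' : (-1:R)^(1+l) = 1 := by rw [add_comm]; exact c2
    have c3 : (-1:R)^(1+(l+2)) = 1 := by
      rw [pow_add, pow_add, c1]; simp
    rw [c1', c2, c3]
    noncomm_ring [e3, e4, f1, f2]

/-- Remark 1.8 of Ferraro–Kirkman–Moore–Won. -/
theorem stmt_9 {R : Type*} [Ring R] [Algebra ℂ R] (α : ℂ) (hα : α ≠ 0)
    (k : ℕ) (hk : 1 ≤ k) (x y z w : R)
    (hxy : x * y = y * x) (hxz : x * z = z * x) (hxw : x * w = w * x)
    (hyz : y * z = z * y) (hyw : y * w = w * y)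
    (hrel : x * y = α • z ^ (2 * k)) :
    ∀ t l : ℕ,
      z ^ t * (x ^ l + (-1 : R) ^ (t + l) * y ^ l) ∈
        Algebra.adjoin ℂ ({z ^ 2, x - y, z * (x + y)} : Set R) := by
  set A := Algebra.adjoin ℂ ({z ^ 2, x - y, z * (x + y)} : Set R) with hA
  have hz2 : z ^ 2 ∈ A := Algebra.subset_adjoin (by simp)
  have hxmy : x - y ∈ A := Algebra.subset_adjoin (by simp)
  have hzxy : z * (x + y) ∈ A := Algebra.subset_adjoin (by simp)
  have hxyA : x * y ∈ A := by
    rw [hrel, pow_mul]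
    exact A.smul_mem (A.pow_mem hz2 k) α
  have main : ∀ l : ℕ,
      (x ^ l + (-1 : R) ^ l * y ^ l ∈ A) ∧
      (z * (x ^ l + (-1 : R) ^ (1 + l) * y ^ l) ∈ A) := by
    intro l
    induction l using Nat.strong_induction_on with
    | _ l ih =>
      match l with
      | 0 =>
        constructor
        · norm_num
        · norm_num
      | 1 =>
        constructor
        · simpa [sub_eq_add_neg] using hxmy
        · norm_num
          exact hzxy
      | (l + 2) =>
        constructor
        · rw [← aux_a x y hxy l]
          exact A.add_mem (A.mul_mem hxmy (ih (l + 1) (by omega)).1)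
            (A.mul_mem hxyA (ih l (by omega)).1)
        · rw [← aux_b x y z hxy hxz hyz l]
          exact A.sub_mem (A.mul_mem hzxy (ih (l + 1) (by omega)).1)
            (A.mul_mem hxyA (ih l (by omega)).2)
  intro t l
  rcases Nat.even_or_odd t with ht | ht
  · have hs : (-1 : R) ^ (t + l) = (-1 : R) ^ l := by
      rw [pow_add, ht.neg_one_pow, one_mul]
    obtain ⟨r, hr⟩ := ht
    rw [hs, hr, ← two_mul, pow_mul]
    exact A.mul_mem (A.pow_mem hz2 r) (main l).1
  · obtain ⟨r, hr⟩ := ht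
    have hs : (-1 : R) ^ (t + l) = (-1 : R) ^ (1 + l) := by
      rw [hr, show 2 * r + 1 + l = 2 * r + (1 + l) by omega, pow_add, pow_mul]
      norm_num
    rw [hs, hr, pow_succ, mul_assoc, pow_mul]
    exact A.mul_mem (A.pow_mem hz2 r) (main l).2
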